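/- Let 0 → L → M → N → 0 be a short exact sequence of A-modules. If L and N are vector-realisable, then M is vector-realisable. -/

import Mathlib

section Realisable

variable {A : Type*} [CommRing A]

/-- `(m₁,…,mₙ)` is an admissible vector for the structure constants `c`,
where `c i s t` denotes `cᵗ_{is}`: `∑ᵢ cᵗ_{is} mᵢ = 0` for all `s, t`. -/
def AdmissibleVec {n d : ℕ} (c : Fin n → Fin d → Fin d → A)
    {M : Type*} [AddCommGroup M] [Module A M] (m : Fin n → M) : Prop :=
  ∀ s t : Fin d, ∑ i, c i s t • m i = 0

/-- The submodule of admissible vectors. -/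
def admissibleVecSub {n d : ℕ} (c : Fin n → Fin d → Fin d → A)
    (M : Type*) [AddCommGroup M] [Module A M] : Submodule A (Fin n → M) where
  carrier := {m | AdmissibleVec c m}
  add_mem' {x y} hx hy := fun s t => by
    simp only [Pi.add_apply, smul_add, Finset.sum_add_distrib, hx s t, hy s t, add_zero]
  zero_mem' := fun s t => by simp
  smul_mem' a x hx := fun s t => by
    simp only [Pi.smul_apply, smul_comm _ a, ← Finset.smul_sum, hx s t, smul_zero]

/-- A vector is realisable if it lies in the image of the natural map
`Aⁿ_ad ⊗_A M → Mⁿ`, i.e. in the span of the vectors `(a₁ • x, …, aₙ • x)` with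
`(a₁,…,aₙ)` an admissible vector of scalars. -/
def RealisableVec {n d : ℕ} (c : Fin n → Fin d → Fin d → A)
    {M : Type*} [AddCommGroup M] [Module A M] (m : Fin n → M) : Prop :=
  m ∈ Submodule.span A
    {v : Fin n → M | ∃ (a : Fin n → A) (x : M), AdmissibleVec c a ∧ v = fun i => a i • x}

/-- `M` is vector-realisable if every admissible vector over `M` is realisable. -/
def VectorRealisable {n d : ℕ} (c : Fin n → Fin d → Fin d → A)
    (M : Type*) [AddCommGroup M] [Module A M] : Prop :=
  ∀ m : Fin n → M, AdmissibleVec c m → RealisableVec c m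

/-- `(m_{st})` is an admissible matrix for the structure constants `c`:
`∑_t cᵗ_{is} m_{ut} = ∑_t cᵘ_{it} m_{ts}` for all `i, s, u`. -/
def AdmissibleMat {n d : ℕ} (c : Fin n → Fin d → Fin d → A)
    {M : Type*} [AddCommGroup M] [Module A M] (m : Fin d → Fin d → M) : Prop :=
  ∀ (i : Fin n) (s u : Fin d), ∑ t, c i s t • m u t = ∑ t, c i t u • m t s

/-- The submodule of admissible matrices. -/
def admissibleMatSub {n d : ℕ} (c : Fin n → Fin d → Fin d → A)
    (M : Type*) [AddCommGroup M] [Module A M] : Submodule A (Fin d → Fin d → M) where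
  carrier := {m | AdmissibleMat c m}
  add_mem' {x y} hx hy := fun i s u => by
    simp only [Pi.add_apply, smul_add, Finset.sum_add_distrib, hx i s u, hy i s u]
  zero_mem' := fun i s u => by simp
  smul_mem' a x hx := fun i s u => by
    simp only [Pi.smul_apply, smul_comm _ a, ← Finset.smul_sum, hx i s u]

/-- A matrix is realisable if it lies in the image of the natural map
`Mat_d(A)_ad ⊗_A M → Mat_d(M)`, i.e. in the span of the matrices `(a_{st} • x)` with
`(a_{st})` an admissible matrix of scalars. -/
def RealisableMat {n d : ℕ} (c : Fin n → Fin d → Fin d → A)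
    {M : Type*} [AddCommGroup M] [Module A M] (m : Fin d → Fin d → M) : Prop :=
  m ∈ Submodule.span A
    {v : Fin d → Fin d → M | ∃ (a : Fin d → Fin d → A) (x : M),
      AdmissibleMat c a ∧ v = fun s t => a s t • x}

/-- The submodule of realisable matrices. -/
def realisableMatSub {n d : ℕ} (c : Fin n → Fin d → Fin d → A)
    (M : Type*) [AddCommGroup M] [Module A M] : Submodule A (Fin d → Fin d → M) :=
  Submodule.span A
    {v : Fin d → Fin d → M | ∃ (a : Fin d → Fin d → A) (x : M),
      AdmissibleMat c a ∧ v = fun s t => a s t • x}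

/-- `M` is matrix-realisable if every admissible matrix over `M` is realisable. -/
def MatrixRealisable {n d : ℕ} (c : Fin n → Fin d → Fin d → A)
    (M : Type*) [AddCommGroup M] [Module A M] : Prop :=
  ∀ m : Fin d → Fin d → M, AdmissibleMat c m → RealisableMat c m

end Realisable

lemma admissibleVec_of_realisableVec {A : Type*} [CommRing A] {n d : ℕ}
    (c : Fin n → Fin d → Fin d → A) {M : Type*} [AddCommGroup M] [Module A M]
    {m : Fin n → M} (h : RealisableVec c m) : AdmissibleVec c m := by
  have hle : Submodule.span A
      {v : Fin n → M | ∃ (a : Fin n → A) (x : M), AdmissibleVec c a ∧ v = fun i => a i • x}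
      ≤ admissibleVecSub c M := by
    rw [Submodule.span_le]
    rintro v ⟨a, x, ha, rfl⟩
    intro s t
    calc ∑ i, c i s t • a i • x = (∑ i, c i s t • a i) • x := by
          rw [Finset.sum_smul]
          exact Finset.sum_congr rfl fun i _ => (smul_assoc _ _ _).symm
      _ = 0 := by rw [ha s t, zero_smul]
  exact hle h

/-- **Lemma 2.6 (vector version).** Let `A` be a Dedekind domain or a field, `Λ` an `A`-algebra
free of finite rank with basis `λ₁,…,λₙ`, `P` a `Λ`-module free of finite rank over `A` with
basis `p₁,…,p_d`, and let `c` be the structure constants, `λᵢ • pₛ = ∑ₜ cᵗ_{is} pₜ`.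
If `0 → L → M → N → 0` is a short exact sequence of `A`-modules and `L` and `N` are
vector-realisable, then so is `M`. -/
theorem vectorRealisable_of_shortExact
    {A : Type*} [CommRing A] [IsDomain A]
    (hA : IsDedekindDomain A ∨ IsField A)
    {n d : ℕ}
    (Λ : Type*) [Ring Λ] [Algebra A Λ]
    (P : Type*) [AddCommGroup P] [Module A P] [Module Λ P] [IsScalarTower A Λ P]
    (bΛ : Module.Basis (Fin n) A Λ) (bP : Module.Basis (Fin d) A P)
    (c : Fin n → Fin d → Fin d → A)
    (hc : ∀ (i : Fin n) (s : Fin d), bΛ i • bP s = ∑ t, c i s t • bP t)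
    (L M N : Type*)
    [AddCommGroup L] [Module A L] [AddCommGroup M] [Module A M] [AddCommGroup N] [Module A N]
    (f : L →ₗ[A] M) (g : M →ₗ[A] N)
    (hf : Function.Injective f) (hg : Function.Surjective g)
    (hfg : LinearMap.range f = LinearMap.ker g)
    (hL : VectorRealisable c L) (hN : VectorRealisable c N) :
    VectorRealisable c M := by
  classical
  intro m hm
  -- the image of `m` under `g` is admissible
  have hgm : AdmissibleVec c (fun i => g (m i)) := by
    intro s t
    calc ∑ i, c i s t • g (m i) = g (∑ i, c i s t • m i) := by
          rw [map_sum]; exact Finset.sum_congr rfl fun i _ => (map_smul g _ _).symm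
      _ = 0 := by rw [hm s t, map_zero]
  have hN' := hN _ hgm
  -- lift a realisable vector in `N` to a realisable vector in `M`
  have key : ∀ w ∈ Submodule.span A
      {v : Fin n → N | ∃ (a : Fin n → A) (x : N), AdmissibleVec c a ∧ v = fun i => a i • x},
      ∃ m' ∈ Submodule.span A
        {v : Fin n → M | ∃ (a : Fin n → A) (x : M), AdmissibleVec c a ∧ v = fun i => a i • x},
        (fun i => g (m' i)) = w := by
    intro w hw
    induction hw using Submodule.span_induction with
    | mem v hv =>
        obtain ⟨a, x, ha, rfl⟩ := hv
        obtain ⟨y, hy⟩ := hg x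
        exact ⟨fun i => a i • y, Submodule.subset_span ⟨a, y, ha, rfl⟩,
          by funext i; simp [hy]⟩
    | zero => exact ⟨0, Submodule.zero_mem _, by funext i; simp⟩
    | add u v hu hv ihu ihv =>
        obtain ⟨mu, hmu, hgu⟩ := ihu
        obtain ⟨mv, hmv, hgv⟩ := ihv
        exact ⟨mu + mv, Submodule.add_mem _ hmu hmv,
          by funext i; simp [← congrFun hgu i, ← congrFun hgv i]⟩
    | smul r u hu ihu =>
        obtain ⟨mu, hmu, hgu⟩ := ihu
        exact ⟨r • mu, Submodule.smul_mem _ r hmu,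
          by funext i; simp [← congrFun hgu i]⟩
  obtain ⟨m', hm'span, hgm'⟩ := key _ hN'
  have hm'adm : AdmissibleVec c m' := admissibleVec_of_realisableVec c hm'span
  -- components of `m - m'` lie in the image of `f`
  have hl : ∀ i, ∃ l, f l = m i - m' i := by
    intro i
    have : m i - m' i ∈ LinearMap.ker g := by
      simp [LinearMap.mem_ker, map_sub, congrFun hgm' i]
    rw [← hfg] at this
    exact this
  choose l hlf using hl
  have hladm : AdmissibleVec c l := by
    intro s t
    apply hf
    rw [map_sum, map_zero]
    calc ∑ i, f (c i s t • l i) = ∑ i, c i s t • (m i - m' i) := by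
          exact Finset.sum_congr rfl fun i _ => by rw [map_smul, hlf]
      _ = (∑ i, c i s t • m i) - ∑ i, c i s t • m' i := by
          rw [← Finset.sum_sub_distrib]
          exact Finset.sum_congr rfl fun i _ => smul_sub _ _ _
      _ = 0 := by rw [hm s t, hm'adm s t, sub_zero]
  have hlreal := hL l hladm
  -- push the realisable vector `l` forward along `f`
  have hfl : (fun i => f (l i)) ∈ Submodule.span A
      {v : Fin n → M | ∃ (a : Fin n → A) (x : M), AdmissibleVec c a ∧ v = fun i => a i • x} := by
    have hmem : (LinearMap.compLeft f (Fin n)) l ∈ Submodule.map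
        (LinearMap.compLeft f (Fin n)) (Submodule.span A
          {v : Fin n → L | ∃ (a : Fin n → A) (x : L), AdmissibleVec c a ∧ v = fun i => a i • x}) :=
      Submodule.mem_map_of_mem hlreal
    rw [Submodule.map_span] at hmem
    have himg : (LinearMap.compLeft f (Fin n)) ''
        {v : Fin n → L | ∃ (a : Fin n → A) (x : L), AdmissibleVec c a ∧ v = fun i => a i • x} ⊆
        {v : Fin n → M | ∃ (a : Fin n → A) (x : M), AdmissibleVec c a ∧ v = fun i => a i • x} := by
      rintro _ ⟨v, ⟨a, x, ha, rfl⟩, rfl⟩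
      exact ⟨a, f x, ha, by funext i; simp [LinearMap.compLeft_apply]⟩
    have := Submodule.span_mono himg hmem
    convert this using 2
    rfl
  have hmeq : m = m' + fun i => f (l i) := by
    funext i; simp [hlf]
  rw [RealisableVec, hmeq]
  exact Submodule.add_mem _ hm'span hfl
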